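/- The number of integer solutions to q(x) = 1, where q is the quadratic form of the tree Dₙ (n ≥ 4), is exactly 2n(n−1). -/

import Mathlib

open Finset

/-- The quadratic form of the Coxeter tree `Dₙ` (0-based: vertex 0 adjacent to
vertices 1, 2, 3, and a chain 3—4—⋯—(n-1)). -/
def qD (n : ℕ) (x : ℕ → ℤ) : ℤ :=
  (∑ i ∈ Finset.range n, (x i)^2) - x 0 * (x 1 + x 2 + x 3)
    - ∑ i ∈ Finset.Ico 3 (n-1), x i * x (i+1)

/-- The linear change of variables putting `2 * qD` in diagonal form. -/
def Fm (x : ℕ → ℤ) : ℕ → ℤ := fun k =>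
  if k = 0 then x 1 - x 2
  else if k = 1 then x 1 + x 2 - x 0
  else if k = 2 then x 0 - x 3
  else x k - x (k + 1)

lemma Fm_ge3 (x : ℕ → ℤ) {k : ℕ} (hk : 3 ≤ k) : Fm x k = x k - x (k + 1) := by
  unfold Fm
  rw [if_neg (by omega), if_neg (by omega), if_neg (by omega)]

lemma key (m : ℕ) (x : ℕ → ℤ) :
    ∑ k ∈ range (m + 4), (Fm x k) ^ 2
      = 2 * qD (m + 4) x - 2 * x (m + 3) * x (m + 4) + (x (m + 4)) ^ 2 := by
  induction m with
  | zero =>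
      show ∑ k ∈ range 4, (Fm x k) ^ 2 = 2 * qD 4 x - 2 * x 3 * x 4 + (x 4) ^ 2
      rw [Finset.sum_range_succ, Finset.sum_range_succ, Finset.sum_range_succ,
        Finset.sum_range_one]
      simp only [qD, Fm, show (4:ℕ) - 1 = 3 from rfl, Finset.Ico_self, Finset.sum_empty]
      norm_num
      rw [Finset.sum_range_succ, Finset.sum_range_succ, Finset.sum_range_succ,
        Finset.sum_range_one]
      ring
  | succ m ih =>
      have h1 : m + 1 + 4 = (m + 4) + 1 := rfl
      rw [h1, Finset.sum_range_succ, Fm_ge3 x (by omega : 3 ≤ m + 4)]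
      have hq : qD (m + 4 + 1) x
          = qD (m + 4) x + (x (m + 4)) ^ 2 - x (m + 3) * x (m + 4) := by
        unfold qD
        rw [show m + 4 + 1 - 1 = (m + 3) + 1 from rfl, show m + 4 - 1 = m + 3 from rfl,
          Finset.sum_range_succ, Finset.sum_Ico_succ_top (by omega : 3 ≤ m + 3)]
        ring
      rw [hq]
      linear_combination ih

lemma key' (n : ℕ) (hn : 4 ≤ n) (x : ℕ → ℤ) (hx : ∀ i, n ≤ i → x i = 0) :
    ∑ k ∈ range n, (Fm x k) ^ 2 = 2 * qD n x := by
  obtain ⟨m, rfl⟩ : ∃ m, n = m + 4 := ⟨n - 4, by omega⟩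
  rw [key, hx (m + 4) le_rfl]
  ring

lemma Fm_inj {n : ℕ} (hn : 4 ≤ n) {x x' : ℕ → ℤ}
    (hx : ∀ i, n ≤ i → x i = 0) (hx' : ∀ i, n ≤ i → x' i = 0)
    (h : Fm x = Fm x') : x = x' := by
  have h3 : ∀ j k, 3 ≤ k → n ≤ k + j → x k = x' k := by
    intro j
    induction j with
    | zero => intro k _ hk; rw [hx k (by omega), hx' k (by omega)]
    | succ j ih =>
        intro k hk3 hkj
        by_cases hle : n ≤ k + j
        · exact ih k hk3 hle
        · have e1 : x k - x (k + 1) = x' k - x' (k + 1) := by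
            have hck := congrFun h k
            rwa [Fm_ge3 x hk3, Fm_ge3 x' hk3] at hck
          have e2 : x (k + 1) = x' (k + 1) := ih (k + 1) (by omega) (by omega)
          omega
  have hA : ∀ k, 3 ≤ k → x k = x' k := fun k hk => h3 n k hk (by omega)
  have h0 := congrFun h 0
  have h1 := congrFun h 1
  have h2 := congrFun h 2
  simp only [Fm] at h0 h1 h2
  norm_num at h0 h1 h2
  have e3 := hA 3 (by omega)
  funext k
  match k with
  | 0 => omega
  | 1 => omega
  | 2 => omega
  | (k + 3) => exact hA (k + 3) (by omega)

lemma Fm_surj (n : ℕ) (hn : 4 ≤ n)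
    (y : ℕ → ℤ) (hysupp : ∀ k, n ≤ k → y k = 0)
    (hysum : ∑ k ∈ range n, (y k) ^ 2 = 2) :
    ∃ x : ℕ → ℤ, ((∀ i, n ≤ i → x i = 0) ∧ qD n x = 1) ∧ Fm x = y := by
  have hpar : (2 : ℤ) ∣ ∑ k ∈ range n, y k := by
    have hz : ((∑ k ∈ range n, y k : ℤ) : ZMod 2) = 0 := by
      push_cast
      have hc : ∀ k ∈ range n, ((y k : ZMod 2)) = ((y k : ZMod 2)) ^ 2 := by
        intro k _
        have : ∀ a : ZMod 2, a = a ^ 2 := by decide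
        exact this _
      rw [Finset.sum_congr rfl hc]
      have h3 : ((∑ k ∈ range n, (y k) ^ 2 : ℤ) : ZMod 2) = ((2 : ℤ) : ZMod 2) := by
        rw [hysum]
      push_cast at h3
      rw [h3]
      decide
    exact (ZMod.intCast_zmod_eq_zero_iff_dvd _ 2).mp hz
  obtain ⟨c, hc⟩ := hpar
  set t := ∑ j ∈ Ico 3 n, y j with ht
  have h03 : ∑ k ∈ Ico 0 3, y k = y 0 + y 1 + y 2 := by
    rw [← Finset.range_eq_Ico, Finset.sum_range_succ, Finset.sum_range_succ,
      Finset.sum_range_one]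
  have hsplit : ∑ k ∈ range n, y k = y 0 + y 1 + y 2 + t := by
    rw [Finset.range_eq_Ico,
      ← Finset.sum_Ico_consecutive _ (by omega : (0:ℕ) ≤ 3) (by omega : 3 ≤ n), h03]
  have hc2 : 2 * c = y 0 + y 1 + y 2 + t := by rw [← hsplit, hc]
  set x : ℕ → ℤ := fun k =>
    if k = 0 then y 2 + t
    else if k = 1 then c
    else if k = 2 then c - y 0
    else ∑ j ∈ Ico k n, y j with hxdef
  have hx0 : x 0 = y 2 + t := by simp [hxdef]
  have hx1 : x 1 = c := by simp [hxdef]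
  have hx2 : x 2 = c - y 0 := by simp [hxdef]
  have hxk : ∀ k, 3 ≤ k → x k = ∑ j ∈ Ico k n, y j := by
    intro k hk
    simp only [hxdef]
    rw [if_neg (by omega), if_neg (by omega), if_neg (by omega)]
  have hxsupp : ∀ i, n ≤ i → x i = 0 := by
    intro i hi
    rw [hxk i (by omega), Finset.Ico_eq_empty (by omega), Finset.sum_empty]
  have hFx : Fm x = y := by
    funext k
    match k with
    | 0 => show Fm x 0 = y 0; unfold Fm; norm_num [hx1, hx2]
    | 1 => show Fm x 1 = y 1; unfold Fm; norm_num [hx0, hx1, hx2]; linarith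
    | 2 => show Fm x 2 = y 2; unfold Fm; norm_num [hx0, hxk 3 (by omega)]; rw [← ht]; ring
    | (k + 3) =>
        rw [Fm_ge3 x (by omega), hxk (k + 3) (by omega), hxk (k + 4) (by omega)]
        by_cases hkn : k + 3 < n
        · rw [Finset.sum_eq_sum_Ico_succ_bot hkn]
          ring
        · rw [Finset.Ico_eq_empty (by omega), Finset.Ico_eq_empty (by omega),
            Finset.sum_empty, hysupp (k + 3) (by omega)]
          ring
  refine ⟨x, ⟨hxsupp, ?_⟩, hFx⟩
  have hq := key' n hn x hxsupp
  rw [hFx, hysum] at hq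
  linarith

/-- Parametrization of integer vectors with exactly two nonzero coordinates, both `±1`. -/
def gD : (ℕ × ℕ) × ℤ × ℤ → ℕ → ℤ :=
  fun p k => if k = p.1.1 then p.2.1 else if k = p.1.2 then p.2.2 else 0

def PD (n : ℕ) : Finset (ℕ × ℕ) := (range n ×ˢ range n).filter fun p => p.1 < p.2

def BD (n : ℕ) : Finset ((ℕ × ℕ) × ℤ × ℤ) := PD n ×ˢ (({-1, 1} : Finset ℤ) ×ˢ {-1, 1})

lemma memBD (n : ℕ) (p : (ℕ × ℕ) × ℤ × ℤ) : p ∈ BD n ↔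
    p.1.1 < p.1.2 ∧ p.1.2 < n ∧ (p.2.1 = -1 ∨ p.2.1 = 1) ∧ (p.2.2 = -1 ∨ p.2.2 = 1) := by
  simp only [BD, PD, Finset.mem_product, Finset.mem_filter, Finset.mem_range,
    Finset.mem_insert, Finset.mem_singleton]
  constructor
  · rintro ⟨⟨⟨h1, h2⟩, h3⟩, h4, h5⟩
    exact ⟨h3, h2, h4, h5⟩
  · rintro ⟨h3, h2, h4, h5⟩
    exact ⟨⟨⟨by omega, h2⟩, h3⟩, h4, h5⟩

lemma injBD (n : ℕ) : Set.InjOn gD ↑(BD n) := by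
  rintro ⟨⟨i, j⟩, s, t⟩ hp ⟨⟨i', j'⟩, s', t'⟩ hq h
  rw [Finset.mem_coe, memBD] at hp hq
  obtain ⟨hij, hjn, hs, ht⟩ := hp
  obtain ⟨hij', hjn', hs', ht'⟩ := hq
  simp only at hij hjn hs ht hij' hjn' hs' ht'
  have hs0 : s ≠ 0 := by rcases hs with rfl | rfl <;> norm_num
  have ht0 : t ≠ 0 := by rcases ht with rfl | rfl <;> norm_num
  have hs0' : s' ≠ 0 := by rcases hs' with rfl | rfl <;> norm_num
  have ht0' : t' ≠ 0 := by rcases ht' with rfl | rfl <;> norm_num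
  have hsupp : ∀ k, (k = i ∨ k = j) ↔ (k = i' ∨ k = j') := by
    intro k
    have hk := congrFun h k
    simp only [gD] at hk
    constructor
    · intro h2
      by_contra hcon
      push_neg at hcon
      rw [if_neg hcon.1, if_neg hcon.2] at hk
      rcases h2 with rfl | rfl
      · rw [if_pos rfl] at hk; exact hs0 hk
      · rw [if_neg (by omega), if_pos rfl] at hk; exact ht0 hk
    · intro h2
      by_contra hcon
      push_neg at hcon
      rw [if_neg hcon.1, if_neg hcon.2] at hk
      rcases h2 with rfl | rfl
      · rw [if_pos rfl] at hk; exact hs0' hk.symm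
      · rw [if_neg (by omega), if_pos rfl] at hk; exact ht0' hk.symm
  have e1 := (hsupp i).mp (Or.inl rfl)
  have e2 := (hsupp j).mp (Or.inr rfl)
  have e3 := (hsupp i').mpr (Or.inl rfl)
  have e4 := (hsupp j').mpr (Or.inr rfl)
  have hii : i = i' := by omega
  have hjj : j = j' := by omega
  subst hii; subst hjj
  have hki := congrFun h i
  have hkj := congrFun h j
  have hjne : ¬ (j = i) := by omega
  simp [gD, hjne] at hki hkj
  simp [hki, hkj]

lemma cardBD (n : ℕ) : (BD n).card = 2 * n * (n - 1) := by
  have hPb : PD n = (range n).biUnion fun j => (range j).image fun i => (i, j) := by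
    ext ⟨i, j⟩
    simp only [PD, Finset.mem_filter, Finset.mem_product, Finset.mem_range,
      Finset.mem_biUnion, Finset.mem_image]
    constructor
    · rintro ⟨⟨h1, h2⟩, h3⟩
      exact ⟨j, h2, i, h3, rfl⟩
    · rintro ⟨j', hj', i', hi', hpe⟩
      obtain ⟨rfl, rfl⟩ := Prod.mk.injEq _ _ _ _ |>.mp hpe
      exact ⟨⟨by omega, hj'⟩, hi'⟩
  have hPcard : (PD n).card = ∑ j ∈ range n, j := by
    rw [hPb, Finset.card_biUnion]
    · refine Finset.sum_congr rfl fun j _ => ?_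
      rw [Finset.card_image_of_injective _ fun a b hab => by
          simpa using congrArg Prod.fst hab, Finset.card_range]
    · intro a _ b _ hab
      simp only [Finset.disjoint_left, Finset.mem_image]
      rintro p ⟨i1, _, rfl⟩ ⟨i2, _, h2⟩
      exact hab (by simpa using (congrArg Prod.snd h2).symm)
  have hBc : (BD n).card = (PD n).card * 4 := by
    rw [BD, Finset.card_product, Finset.card_product]
    norm_num
  rw [hBc, hPcard]
  calc (∑ j ∈ range n, j) * 4 = ((∑ j ∈ range n, j) * 2) * 2 := by ring
    _ = n * (n - 1) * 2 := by rw [Finset.sum_range_id_mul_two]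
    _ = 2 * n * (n - 1) := by ring

lemma Yeq (n : ℕ) (hn : 4 ≤ n) :
    {y : ℕ → ℤ | (∀ k, n ≤ k → y k = 0) ∧ ∑ k ∈ range n, (y k) ^ 2 = 2}
      = gD '' ↑(BD n) := by
  apply Set.Subset.antisymm
  · rintro y ⟨hysupp, hysum⟩
    set T := (range n).filter fun k => y k ≠ 0 with hT
    have hbound : ∀ k, (y k) ^ 2 ≤ 1 := by
      intro k
      by_cases hk : k < n
      · have hle : (y k) ^ 2 ≤ 2 := by
          calc (y k) ^ 2 ≤ ∑ j ∈ range n, (y j) ^ 2 :=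
                Finset.single_le_sum (fun j _ => sq_nonneg (y j)) (Finset.mem_range.mpr hk)
            _ = 2 := hysum
        have ha : y k ≤ 1 := by nlinarith [sq_nonneg (y k - 2)]
        have hb : -1 ≤ y k := by nlinarith [sq_nonneg (y k + 2)]
        nlinarith [mul_nonneg (by linarith : (0:ℤ) ≤ 1 - y k) (by linarith : (0:ℤ) ≤ 1 + y k)]
      · rw [hysupp k (by omega)]; norm_num
    have hTsum : ∑ k ∈ T, (y k) ^ 2 = 2 := by
      rw [hT, Finset.sum_filter_of_ne]
      · exact hysum
      · intro k _ hne h0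
        exact hne (by rw [h0]; ring)
    have hTone : ∀ k ∈ T, (y k) ^ 2 = 1 := by
      intro k hk
      have h1 : y k ≠ 0 := (Finset.mem_filter.mp hk).2
      have h2 : 1 ≤ (y k) ^ 2 := by
        rcases h1.lt_or_gt with hlt | hlt <;> nlinarith
      have := hbound k
      omega
    have hcard : T.card = 2 := by
      have hh : ∑ k ∈ T, (y k) ^ 2 = (T.card : ℤ) := by
        rw [Finset.sum_congr rfl hTone, Finset.sum_const, nsmul_eq_mul, mul_one]
      rw [hTsum] at hh
      exact_mod_cast hh.symm
    obtain ⟨a, b, hab, hTe⟩ := Finset.card_eq_two.mp hcard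
    obtain ⟨i, j, hij, hTij⟩ : ∃ i j, i < j ∧ T = {i, j} := by
      rcases hab.lt_or_gt with hl | hl
      · exact ⟨a, b, hl, hTe⟩
      · exact ⟨b, a, hl, by rw [hTe, Finset.pair_comm]⟩
    have hiT : i ∈ T := by rw [hTij]; simp
    have hjT : j ∈ T := by rw [hTij]; simp
    have hjn : j < n := Finset.mem_range.mp (Finset.mem_filter.mp hjT).1
    have hval : ∀ k ∈ T, y k = -1 ∨ y k = 1 := by
      intro k hk
      have h1 : y k ≠ 0 := (Finset.mem_filter.mp hk).2
      have h2 := hbound k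
      have h3 : -1 ≤ y k ∧ y k ≤ 1 := by
        constructor <;> nlinarith
      omega
    refine ⟨((i, j), (y i, y j)), ?_, ?_⟩
    · rw [Finset.mem_coe, memBD]
      exact ⟨hij, hjn, hval i hiT, hval j hjT⟩
    · funext k
      simp only [gD]
      by_cases hki : k = i
      · rw [if_pos hki, hki]
      · rw [if_neg hki]
        by_cases hkj : k = j
        · rw [if_pos hkj, hkj]
        · rw [if_neg hkj]
          by_cases hkn : k < n
          · have hkT : k ∉ T := by rw [hTij]; simp [hki, hkj]
            simp only [hT, Finset.mem_filter, Finset.mem_range, not_and, not_not] at hkT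
            exact (hkT hkn).symm
          · exact (hysupp k (by omega)).symm
  · rintro y ⟨⟨⟨i, j⟩, s, t⟩, hmem, rfl⟩
    rw [Finset.mem_coe, memBD] at hmem
    obtain ⟨hij, hjn, hs, ht⟩ := hmem
    simp only at hij hjn hs ht
    constructor
    · intro k hk
      simp only [gD]
      rw [if_neg (by omega), if_neg (by omega)]
    · have hexp : ∀ k, (gD ((i, j), (s, t)) k) ^ 2
          = (if k = i then s ^ 2 else 0) + (if k = j then t ^ 2 else 0) := by
        intro k
        simp only [gD]
        by_cases hki : k = i
        · rw [if_pos hki, if_pos hki, if_neg (by omega), add_zero]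
        · rw [if_neg hki, if_neg hki, zero_add]
          by_cases hkj : k = j
          · rw [if_pos hkj, if_pos hkj]
          · rw [if_neg hkj, if_neg hkj]; ring
      rw [Finset.sum_congr rfl fun k _ => hexp k, Finset.sum_add_distrib,
        Finset.sum_ite_eq' (range n) i, Finset.sum_ite_eq' (range n) j,
        if_pos (Finset.mem_range.mpr (by omega)), if_pos (Finset.mem_range.mpr hjn)]
      rcases hs with rfl | rfl <;> rcases ht with rfl | rfl <;> norm_num

theorem qD_card_solutions (n : ℕ) (hn : 4 ≤ n) :
    {x : ℕ → ℤ | (∀ i, n ≤ i → x i = 0) ∧ qD n x = 1}.ncard = 2 * n * (n - 1) := by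
  set S := {x : ℕ → ℤ | (∀ i, n ≤ i → x i = 0) ∧ qD n x = 1} with hS
  set Y := {y : ℕ → ℤ | (∀ k, n ≤ k → y k = 0) ∧ ∑ k ∈ range n, (y k) ^ 2 = 2} with hY
  have himg : Fm '' S = Y := by
    apply Set.Subset.antisymm
    · rintro y ⟨x, hxS, rfl⟩
      obtain ⟨hsupp, hq⟩ := hxS
      refine ⟨fun k hk => ?_, ?_⟩
      · rw [Fm_ge3 x (by omega), hsupp k hk, hsupp (k + 1) (by omega)]
        ring
      · rw [key' n hn x hsupp, hq]; norm_num
    · rintro y hyY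
      obtain ⟨hysupp, hysum⟩ := hyY
      obtain ⟨x, hxS, hFx⟩ := Fm_surj n hn y hysupp hysum
      exact ⟨x, hxS, hFx⟩
  have hinjS : Set.InjOn Fm S := fun x hx x' hx' h => Fm_inj hn hx.1 hx'.1 h
  calc S.ncard = (Fm '' S).ncard := (Set.ncard_image_of_injOn hinjS).symm
    _ = Y.ncard := by rw [himg]
    _ = (gD '' ↑(BD n)).ncard := by rw [hY, Yeq n hn]
    _ = (↑(BD n) : Set ((ℕ × ℕ) × ℤ × ℤ)).ncard := Set.ncard_image_of_injOn (injBD n)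
    _ = (BD n).card := Set.ncard_coe_finset _
    _ = 2 * n * (n - 1) := cardBD n
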